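/- arXiv:2301.10091 — 3 statements merged into one kernel-verified Lean document; each statement's English description precedes it below -/
import Mathlib

section
/- Let p be a polynomial in d complex variables of total degree at most n with no zeros in the open unit ball B_d of C^d. Then the branch of log p on B_d normalized by its value at 0 satisfies |Im(log p(z) − log p(0))| ≤ nπ for all z in B_d. -/
open Polynomial Metric MeasureTheory

section aux

lemma im_inv_eq (r : ℂ) (t : ℝ) :
    (((t : ℂ) - r)⁻¹).im = r.im / ((t - r.re)^2 + r.im^2) := by
  rw [Complex.inv_im]
  simp [Complex.normSq_apply]
  ring_nf

lemma aux_integrable (r : ℂ) :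
    IntervalIntegrable (fun t : ℝ => (((t : ℂ) - r)⁻¹).im) MeasureTheory.volume 0 1 := by
  simp only [im_inv_eq]
  rcases eq_or_ne r.im 0 with h | h
  · simp [h]
  · apply Continuous.intervalIntegrable
    apply Continuous.div (by fun_prop) (by fun_prop)
    intro t
    positivity

lemma aux_bound (r : ℂ) :
    |∫ t in (0:ℝ)..1, (((t : ℂ) - r)⁻¹).im| ≤ Real.pi := by
  simp only [im_inv_eq]
  rcases eq_or_ne r.im 0 with h | h
  · simp [h, Real.pi_pos.le]
  · set a := r.re; set b := r.im
    have hderiv : ∀ t : ℝ, HasDerivAt (fun t : ℝ => Real.arctan ((t - a)/b))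
        (b / ((t - a)^2 + b^2)) t := by
      intro t
      have h1 : HasDerivAt (fun t : ℝ => (t - a)/b) (1/b) t := by
        simpa using ((hasDerivAt_id t).sub_const a).div_const b
      have := (Real.hasDerivAt_arctan ((t - a)/b)).comp t h1
      refine this.congr_deriv ?_
      have hb2 : (0:ℝ) < (t-a)^2 + b^2 := by positivity
      field_simp
      ring
    have hint : ∫ t in (0:ℝ)..1, b / ((t - a)^2 + b^2)
        = Real.arctan ((1 - a)/b) - Real.arctan ((0 - a)/b) := by
      apply intervalIntegral.integral_eq_sub_of_hasDerivAt (fun t _ => hderiv t)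
      simpa only [im_inv_eq] using aux_integrable r
    rw [hint]
    have h1 := Real.arctan_lt_pi_div_two ((1 - a)/b)
    have h2 := Real.neg_pi_div_two_lt_arctan ((1 - a)/b)
    have h3 := Real.arctan_lt_pi_div_two ((0 - a)/b)
    have h4 := Real.neg_pi_div_two_lt_arctan ((0 - a)/b)
    rw [abs_sub_le_iff]
    constructor <;> linarith

lemma natDegree_slice_le {d : ℕ} (p : MvPolynomial (Fin d) ℂ) (z : Fin d → ℂ) :
    (MvPolynomial.eval₂ (Polynomial.C : ℂ →+* ℂ[X])
      (fun i => Polynomial.C (z i) * Polynomial.X) p).natDegree ≤ p.totalDegree := by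
  conv_lhs => rw [p.as_sum]
  rw [MvPolynomial.eval₂_sum]
  apply Polynomial.natDegree_sum_le_of_forall_le
  intro m hm
  rw [MvPolynomial.eval₂_monomial]
  refine le_trans (Polynomial.natDegree_mul_le) ?_
  rw [Polynomial.natDegree_C, zero_add]
  refine le_trans (Polynomial.natDegree_prod_le _ _) ?_
  have h1 : ∀ i ∈ m.support, ((C (z i) * X) ^ m i).natDegree ≤ m i := by
    intro i _
    refine Polynomial.natDegree_pow_le.trans ?_
    have : (C (z i) * X).natDegree ≤ 1 :=
      (Polynomial.natDegree_C_mul_le _ _).trans (by simp)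
    calc m i * (C (z i) * X).natDegree ≤ m i * 1 := Nat.mul_le_mul_left _ this
      _ = m i := by simp
  refine le_trans (Finset.sum_le_sum h1) ?_
  exact MvPolynomial.le_totalDegree hm

end aux

open Metric in
/-- If `p` is a polynomial in `d` variables of total degree at most `n` with no zeros in
the open unit ball of `ℂ^d`, then the branch of `log p` normalized at `0`, obtained by
integrating `(d/dt) log p(tz)` along slices, satisfies `|Im (log p z − log p 0)| ≤ n π`. -/
theorem im_log_mvpoly_bound (d n : ℕ) (p : MvPolynomial (Fin d) ℂ)
    (hdeg : p.totalDegree ≤ n)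
    (hnz : ∀ z ∈ ball (0 : EuclideanSpace ℂ (Fin d)) 1,
      MvPolynomial.eval (fun i => z i) p ≠ 0) :
    ∀ z ∈ ball (0 : EuclideanSpace ℂ (Fin d)) 1,
      |(∫ t in (0:ℝ)..1,
          deriv (fun w : ℂ => MvPolynomial.eval (fun i => w * z i) p) (t : ℂ)
            / MvPolynomial.eval (fun i => (t : ℂ) * z i) p).im|
        ≤ n * Real.pi := by
  intro z hz
  have hzn : ‖z‖ < 1 := mem_ball_zero_iff.mp hz
  set f : ℂ → ℂ := fun w => MvPolynomial.eval (fun i => w * z i) p with hf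
  set q : Polynomial ℂ := MvPolynomial.eval₂ (Polynomial.C : ℂ →+* ℂ[X])
      (fun i => Polynomial.C (z i) * Polynomial.X) p with hqdef
  have hq_eval : ∀ w : ℂ, Polynomial.eval w q = f w := by
    intro w
    have h1 : Polynomial.eval w q = (Polynomial.evalRingHom w : ℂ[X] →+* ℂ) q := rfl
    rw [h1, hqdef, MvPolynomial.eval₂_comp_left (Polynomial.evalRingHom w)]
    have h2 : (Polynomial.evalRingHom w).comp (Polynomial.C : ℂ →+* ℂ[X]) = RingHom.id ℂ := by
      ext x; simp
    rw [h2]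
    have h3 : (⇑(Polynomial.evalRingHom w) ∘ fun i => Polynomial.C (z i) * Polynomial.X)
        = fun i => w * z i := by
      funext i
      show Polynomial.eval w (Polynomial.C (z i) * Polynomial.X) = w * z i
      rw [Polynomial.eval_mul, Polynomial.eval_C, Polynomial.eval_X, mul_comm]
    rw [h3]
    rfl
  have hfne : ∀ w : ℂ, ‖w‖ ≤ 1 → f w ≠ 0 := by
    intro w hw
    have hmem : w • z ∈ ball (0 : EuclideanSpace ℂ (Fin d)) 1 := by
      rw [mem_ball_zero_iff, norm_smul]
      calc ‖w‖ * ‖z‖ ≤ 1 * ‖z‖ := by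
            apply mul_le_mul_of_nonneg_right hw (norm_nonneg z)
        _ = ‖z‖ := one_mul _
        _ < 1 := hzn
    have := hnz (w • z) hmem
    simpa [hf] using this
  have hq0 : q ≠ 0 := by
    intro h
    exact hfne 0 (by simp) (by rw [← hq_eval 0, h]; simp)
  have hsplit : q.roots.card = q.natDegree :=
    Polynomial.splits_iff_card_roots.mp (IsAlgClosed.splits q)
  have ha : q.leadingCoeff ≠ 0 := Polynomial.leadingCoeff_ne_zero.mpr hq0
  set L : List ℂ := q.roots.toList with hL
  have hLcard : L.length ≤ n := by
    rw [hL, Multiset.length_toList, hsplit]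
    exact le_trans (natDegree_slice_le p z) hdeg
  have habs : ∀ i : Fin L.length, 1 < ‖L.get i‖ := by
    intro i
    by_contra hcon
    push_neg at hcon
    have hmem : L.get i ∈ q.roots := Multiset.mem_toList.mp (L.get_mem _)
    have : Polynomial.eval (L.get i) q = 0 := Polynomial.isRoot_of_mem_roots hmem
    rw [hq_eval] at this
    exact hfne _ hcon this
  have hne : ∀ t ∈ Set.uIcc (0:ℝ) 1, ∀ i : Fin L.length, (t:ℂ) - L.get i ≠ 0 := by
    intro t ht i
    rw [Set.uIcc_of_le zero_le_one] at ht
    intro hcon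
    have ht1 : ‖(t : ℂ)‖ ≤ 1 := by
      rw [Complex.norm_real, Real.norm_of_nonneg ht.1]
      exact ht.2
    rw [sub_eq_zero] at hcon
    rw [hcon] at ht1
    exact absurd ht1 (not_le.mpr (habs i))
  have hf_eq : ∀ w : ℂ, f w = q.leadingCoeff * ∏ i : Fin L.length, (w - L.get i) := by
    intro w
    rw [← hq_eval w]
    conv_lhs => rw [← Polynomial.C_leadingCoeff_mul_prod_multiset_X_sub_C hsplit]
    rw [Polynomial.eval_mul, Polynomial.eval_C, Polynomial.eval_multiset_prod]
    congr 1
    have hq_roots : q.roots = (L : Multiset ℂ) := (Multiset.coe_toList q.roots).symm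
    rw [Multiset.map_map, hq_roots, Multiset.map_coe, Multiset.prod_coe]
    conv_lhs => rw [← L.ofFn_get, List.map_ofFn]
    rw [List.prod_ofFn]
    simp [Function.comp]
  have hlog : Set.EqOn
      (fun t : ℝ => deriv (fun w : ℂ => MvPolynomial.eval (fun i => w * z i) p) (t : ℂ)
            / MvPolynomial.eval (fun i => (t : ℂ) * z i) p)
      (fun t : ℝ => ∑ i : Fin L.length, ((t:ℂ) - L.get i)⁻¹) (Set.uIcc (0:ℝ) 1) := by
    intro t ht
    show deriv f (t : ℂ) / f (t : ℂ) = _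
    rw [← logDeriv_apply]
    have hfe : f = fun w => q.leadingCoeff * ∏ i : Fin L.length, (w - L.get i) :=
      funext hf_eq
    rw [hfe, logDeriv_const_mul _ _ ha,
      logDeriv_prod (s := Finset.univ) (f := fun (i : Fin L.length) (w : ℂ) => w - L.get i)
        (fun i _ => hne t ht i)
        (fun i _ => (differentiable_id.sub_const _).differentiableAt)]
    congr 1
    ext i
    rw [logDeriv_apply, deriv_sub_const, deriv_id'', one_div]
  rw [intervalIntegral.integral_congr hlog]
  have hintC : ∀ i : Fin L.length,
      IntervalIntegrable (fun t : ℝ => ((t:ℂ) - L.get i)⁻¹) volume 0 1 := by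
    intro i
    apply ContinuousOn.intervalIntegrable
    apply ContinuousOn.inv₀ (by fun_prop)
    exact fun t ht => hne t ht i
  rw [intervalIntegral.integral_finset_sum (fun i _ => hintC i), Complex.im_sum]
  have him : ∀ i : Fin L.length,
      (∫ t in (0:ℝ)..1, ((t:ℂ) - L.get i)⁻¹).im
        = ∫ t in (0:ℝ)..1, (((t:ℂ) - L.get i)⁻¹).im := by
    intro i
    rw [intervalIntegral.integral_of_le zero_le_one,
      intervalIntegral.integral_of_le zero_le_one]
    exact (integral_im ((hintC i).1)).symm
  calc |∑ i : Fin L.length, (∫ t in (0:ℝ)..1, ((t:ℂ) - L.get i)⁻¹).im|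
      ≤ ∑ i : Fin L.length, |(∫ t in (0:ℝ)..1, ((t:ℂ) - L.get i)⁻¹).im| :=
        Finset.abs_sum_le_sum_abs _ _
    _ ≤ ∑ _i : Fin L.length, Real.pi := by
        apply Finset.sum_le_sum
        intro i _
        rw [him i]
        exact aux_bound _
    _ = L.length * Real.pi := by simp [mul_comm]
    _ ≤ n * Real.pi := by
        apply mul_le_mul_of_nonneg_right _ Real.pi_pos.le
        exact_mod_cast hLcard
end

section
/- Define h(x) = x²/(1 + log x)² for x ≥ 1. Then for every λ ∈ C with |λ| ≥ 1, the integral over the unit disk (1/π)∫_D h(2|λ|/|z − λ|) dA(z) is at most 16. -/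
open MeasureTheory Real Set Metric Filter Topology
open scoped ENNReal NNReal


lemma lintegral_radial (g : ℝ → ℝ≥0∞) (hg : Measurable g) :
    ∫⁻ w : ℂ, g ‖w‖ = 2 * (NNReal.pi : ℝ≥0∞) *
      ∫⁻ t in Ioi (0 : ℝ), ENNReal.ofReal t * g t := by
  have hmp := (volume : Measure ℂ).measurePreserving_homeomorphUnitSphereProd
  have hfm : Measurable fun p : sphere (0 : ℂ) 1 × Ioi (0 : ℝ) => g p.2 :=
    hg.comp (measurable_subtype_coe.comp measurable_snd)
  have e1 : ∫⁻ w : ℂ, g ‖w‖ =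
      ∫⁻ x : ({0}ᶜ : Set ℂ), g ‖x.1‖ ∂((volume : Measure ℂ).comap Subtype.val) := by
    rw [lintegral_subtype_comap (measurableSet_singleton (0:ℂ)).compl fun w => g ‖w‖,
      restrict_compl_singleton]
  have e2 : ∫⁻ x : ({0}ᶜ : Set ℂ), g ‖x.1‖ ∂((volume : Measure ℂ).comap Subtype.val) =
      ∫⁻ p : sphere (0 : ℂ) 1 × Ioi (0 : ℝ), g p.2
        ∂((volume : Measure ℂ).toSphere.prod (Measure.volumeIoiPow (Module.finrank ℝ ℂ - 1))) := by
    rw [← hmp.lintegral_comp hfm]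
    simp
  have e3 : ∫⁻ p : sphere (0 : ℂ) 1 × Ioi (0 : ℝ), g p.2
        ∂((volume : Measure ℂ).toSphere.prod (Measure.volumeIoiPow (Module.finrank ℝ ℂ - 1))) =
      (volume : Measure ℂ).toSphere univ * ∫⁻ t : Ioi (0 : ℝ), g t
        ∂(Measure.volumeIoiPow (Module.finrank ℝ ℂ - 1)) := by
    rw [lintegral_prod _ hfm.aemeasurable]
    simp [lintegral_const, mul_comm]
  have e4 : (volume : Measure ℂ).toSphere univ = 2 * (NNReal.pi : ℝ≥0∞) := by
    rw [Measure.toSphere_apply_univ, Complex.finrank_real_complex, Complex.volume_ball]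
    simp
  have e5 : ∫⁻ t : Ioi (0 : ℝ), g t ∂(Measure.volumeIoiPow (Module.finrank ℝ ℂ - 1)) =
      ∫⁻ t in Ioi (0 : ℝ), ENNReal.ofReal t * g t := by
    rw [Measure.volumeIoiPow]
    rw [lintegral_withDensity_eq_lintegral_mul _
      (f := fun r : Ioi (0:ℝ) => ENNReal.ofReal (r.1 ^ (Module.finrank ℝ ℂ - 1)))
      (by exact (measurable_subtype_coe.pow_const _).ennreal_ofReal)
      (show Measurable fun t : Ioi (0:ℝ) => g t.1 from hg.comp measurable_subtype_coe)]
    have : ∀ r : Ioi (0:ℝ),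
        (ENNReal.ofReal (r.1 ^ (Module.finrank ℝ ℂ - 1))) * g r.1 = ENNReal.ofReal r.1 * g r.1 := by
      intro r; rw [Complex.finrank_real_complex]; norm_num
    calc ∫⁻ r : Ioi (0:ℝ),
          (fun r : Ioi (0:ℝ) => ENNReal.ofReal (r.1 ^ (Module.finrank ℝ ℂ - 1)))  r * g r.1
            ∂((volume : Measure ℝ).comap Subtype.val)
        = ∫⁻ r : Ioi (0:ℝ), ENNReal.ofReal r.1 * g r.1 ∂((volume : Measure ℝ).comap Subtype.val) := by
          exact lintegral_congr fun r => this r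
      _ = ∫⁻ t in Ioi (0 : ℝ), ENNReal.ofReal t * g t :=
          lintegral_subtype_comap measurableSet_Ioi fun t => ENNReal.ofReal t * g t
  rw [e1, e2, e3, e4, e5]

lemma h_le16 {a : ℝ} (h1 : 1 ≤ a) (h10 : a ≤ 10) :
    a ^ 2 / (1 + Real.log a) ^ 2 ≤ 16 := by
  have hla : 0 ≤ Real.log a := Real.log_nonneg h1
  have ha0 : (0 : ℝ) < a := by linarith
  have key : a ≤ 4 * (1 + Real.log a) := by
    rcases le_or_gt a 4 with h | h
    · nlinarith
    · have h4 : Real.log (4 / a) ≤ 4 / a - 1 :=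
        Real.log_le_sub_one_of_pos (by positivity)
      have hlog4 : Real.log (4 / a) = Real.log 4 - Real.log a :=
        Real.log_div (by norm_num) (by positivity)
      have l4 : Real.log 4 = 2 * Real.log 2 := by
        rw [show (4 : ℝ) = 2 ^ 2 by norm_num, Real.log_pow]; push_cast; ring
      have l2 : 0.6931471803 < Real.log 2 := Real.log_two_gt_d9
      have hloga : 2 * Real.log 2 + 1 - 4 / a ≤ Real.log a := by
        rw [hlog4, l4] at h4; linarith
      have h16a : 4 / a ≤ 2.9 - a / 4 := by
        rw [div_le_iff₀ ha0]
        nlinarith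
      nlinarith
  have hd : (0 : ℝ) < 1 + Real.log a := by linarith
  rw [div_le_iff₀ (by positivity)]
  nlinarith [mul_self_le_mul_self (le_of_lt ha0) key]


lemma psi_integral {r c : ℝ} (hc : 0 < c) :
    IntegrableOn (fun t => 4 * r ^ 2 / (t * (c - Real.log t) ^ 2)) (Ioo (0:ℝ) 1) ∧
    ∫ t in Ioo (0:ℝ) 1, 4 * r ^ 2 / (t * (c - Real.log t) ^ 2) = 4 * r ^ 2 / c := by
  set ψ : ℝ → ℝ := fun t => 4 * r ^ 2 / (t * (c - Real.log t) ^ 2) with hψ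
  set J : ℝ → ℝ := fun s => 4 * r ^ 2 / (c + s) ^ 2 with hJ
  have hcs : ∀ s : ℝ, s ∈ Ici (0:ℝ) → (0:ℝ) < c + s := fun s hs => by
    simp only [mem_Ici] at hs; linarith
  have hderiv : ∀ s ∈ Ici (0:ℝ), HasDerivAt (fun s => -(4 * r ^ 2) / (c + s)) (J s) s := by
    intro s hs
    have h := hcs s hs
    have := (hasDerivAt_const s (-(4 * r ^ 2))).div ((hasDerivAt_id s).const_add c) h.ne'
    convert this using 1
    case e'_9 => show 4 * r ^ 2 / (c + s) ^ 2 = _; simp only [id]; ring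
    case e'_8 => funext x; simp [Pi.div_apply]
    all_goals rfl
  have hpos : ∀ s ∈ Ioi (0:ℝ), 0 ≤ J s := fun s hs => by positivity
  have htend : Tendsto (fun s => -(4 * r ^ 2) / (c + s)) atTop (𝓝 0) := by
    have h1 : Tendsto (fun s : ℝ => c + s) atTop atTop :=
      tendsto_atTop_add_const_left _ c tendsto_id
    have := h1.inv_tendsto_atTop.const_mul (-(4 * r ^ 2))
    simpa [div_eq_mul_inv] using this
  have hJint : IntegrableOn J (Ioi (0:ℝ)) :=
    integrableOn_Ioi_deriv_of_nonneg' hderiv hpos htend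
  have hJval : ∫ s in Ioi (0:ℝ), J s = 4 * r ^ 2 / c := by
    rw [integral_Ioi_of_hasDerivAt_of_nonneg' hderiv hpos htend]
    simp [neg_div]
  -- change of variables t = exp (-s)
  set φ : ℝ → ℝ := fun s => Real.exp (-s) with hφ
  have himg : φ '' Ioi (0:ℝ) = Ioo (0:ℝ) 1 := by
    ext x
    simp only [mem_image, mem_Ioi, mem_Ioo, hφ]
    constructor
    · rintro ⟨s, hs, rfl⟩
      exact ⟨Real.exp_pos _, Real.exp_lt_one_iff.2 (by linarith)⟩
    · rintro ⟨hx0, hx1⟩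
      exact ⟨-Real.log x, by simpa using Real.log_neg hx0 hx1,
        by rw [neg_neg, Real.exp_log hx0]⟩
  have hφd : ∀ s ∈ Ioi (0:ℝ), HasDerivWithinAt φ (-Real.exp (-s)) (Ioi (0:ℝ)) s := by
    intro s _
    have h : HasDerivAt φ (Real.exp (-s) * (-1)) s :=
      (Real.hasDerivAt_exp (-s)).comp s ((hasDerivAt_id s).neg)
    simpa [mul_comm] using h.hasDerivWithinAt
  have hinj : InjOn φ (Ioi (0:ℝ)) := fun a _ b _ h => by
    have := Real.exp_injective h
    linarith [neg_injective this]
  have hcongr : ∀ s ∈ Ioi (0:ℝ), |(-Real.exp (-s))| • ψ (φ s) = J s := by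
    intro s hs
    have he : (0:ℝ) < Real.exp (-s) := Real.exp_pos _
    simp only [abs_neg, abs_of_pos he, smul_eq_mul, hψ, hφ, hJ, Real.log_exp]
    rw [sub_neg_eq_add]
    rw [mul_div_assoc', mul_comm, mul_div_assoc, div_mul_cancel_left₀ he.ne', ← div_eq_mul_inv]
  constructor
  · rw [← himg]
    rw [integrableOn_image_iff_integrableOn_abs_deriv_smul measurableSet_Ioi hφd hinj]
    exact hJint.congr_fun (fun s hs => (hcongr s hs).symm) measurableSet_Ioi
  · rw [← himg, integral_image_eq_integral_abs_deriv_smul measurableSet_Ioi hφd hinj]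
    rw [setIntegral_congr_fun measurableSet_Ioi hcongr]
    exact hJval


/-- With `h x = x ^ 2 / (1 + log x) ^ 2`, for every `λ ∈ ℂ` with `|λ| ≥ 1`,
`(1/π) ∫_{𝔻} h (2|λ|/|z − λ|) dA(z) ≤ 16`. -/
theorem integral_h_bound (lam : ℂ) (hlam : 1 ≤ ‖lam‖) :
    (1 / Real.pi) * ∫ z in Metric.ball (0 : ℂ) 1,
      (2 * ‖lam‖ / ‖z - lam‖) ^ 2 /
        (1 + Real.log (2 * ‖lam‖ / ‖z - lam‖)) ^ 2 ≤ 16 := by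
  set r : ℝ := ‖lam‖ with hrdef
  set F : ℂ → ℝ := fun z => (2 * r / ‖z - lam‖) ^ 2 /
      (1 + Real.log (2 * r / ‖z - lam‖)) ^ 2 with hF
  have hπ : (0:ℝ) < Real.pi := Real.pi_pos
  have hF0 : ∀ z, 0 ≤ F z := fun z => by positivity
  have hFmeas : Measurable F := by
    have m1 : Measurable fun z : ℂ => 2 * r / ‖z - lam‖ :=
      measurable_const.div (continuous_norm.measurable.comp
        ((measurable_id.sub_const lam)))
    exact (m1.pow_const 2).div (((Real.measurable_log.comp m1).const_add 1).pow_const 2)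
  have hballvol : (volume (ball (0:ℂ) 1)) = (NNReal.pi : ℝ≥0∞) := by
    rw [Complex.volume_ball]; simp
  have hvolreal : (volume (ball (0:ℂ) 1)).toReal = Real.pi := by
    rw [hballvol]; simp [NNReal.coe_real_pi]
  -- basic distance facts
  have habs : ∀ z : ℂ, z ∈ ball (0:ℂ) 1 →
      0 < ‖z - lam‖ ∧ ‖z - lam‖ < 1 + r ∧ r - 1 < ‖z - lam‖ := by
    intro z hz
    rw [mem_ball_zero_iff] at hz
    have h1 : ‖z - lam‖ ≤ ‖z‖ + r := by
      simpa [hrdef] using norm_sub_le z lam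
    have h2 : r - ‖z‖ ≤ ‖z - lam‖ := by
      have := norm_sub_norm_le lam z
      rw [norm_sub_rev] at this
      simpa [hrdef] using this
    have hz' : ‖z‖ < 1 := by simpa using hz
    refine ⟨by nlinarith, by nlinarith, by nlinarith⟩
  rcases le_or_gt (5/4 : ℝ) r with hr54 | hr54
  · -- pointwise case
    have hbound : ∀ z ∈ ball (0:ℂ) 1, ‖F z‖ ≤ 16 := by
      intro z hz
      obtain ⟨ht0, ht2, ht1⟩ := habs z hz
      set a : ℝ := 2 * r / ‖z - lam‖ with ha
      have ha1 : 1 ≤ a := by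
        rw [ha, le_div_iff₀ ht0]; nlinarith
      have ha10 : a ≤ 10 := by
        rw [ha, div_le_iff₀ ht0]; nlinarith
      have : F z ≤ 16 := h_le16 ha1 ha10
      rwa [Real.norm_of_nonneg (hF0 z)]
    have key : ‖∫ z in ball (0:ℂ) 1, F z‖ ≤ 16 * (volume (ball (0:ℂ) 1)).toReal :=
      norm_setIntegral_le_of_norm_le_const (by rw [hballvol]; exact ENNReal.coe_lt_top)
        hbound
    rw [hvolreal] at key
    have : ∫ z in ball (0:ℂ) 1, F z ≤ 16 * Real.pi :=
      le_trans (le_abs_self _) key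
    rw [show (1:ℝ)/Real.pi * ∫ z in ball (0:ℂ) 1, F z
        = (∫ z in ball (0:ℂ) 1, F z) / Real.pi by ring]
    rw [div_le_iff₀ hπ]; linarith
  · -- integral case, 1 ≤ r < 5/4
    set c : ℝ := 1 + Real.log (2 * r) with hcdef
    have hl2 : (0.6931471803:ℝ) < Real.log 2 := Real.log_two_gt_d9
    have hcge : 1 + Real.log 2 ≤ c := by
      have : Real.log 2 ≤ Real.log (2 * r) :=
        Real.log_le_log (by norm_num) (by nlinarith)
      linarith
    have hc0 : 0 < c := by linarith
    obtain ⟨hψint, hψval⟩ := psi_integral (r := r) hc0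
    set ψ : ℝ → ℝ := fun t => 4 * r ^ 2 / (t * (c - Real.log t) ^ 2) with hψ
    set G : ℝ → ℝ := fun t => if t ∈ Ioo (0:ℝ) 1 then 4 * r ^ 2 / (t ^ 2 * (c - Real.log t) ^ 2) else 0
      with hG
    have hGmeas : Measurable G := by
      refine Measurable.ite measurableSet_Ioo ?_ measurable_const
      exact measurable_const.div ((measurable_id.pow_const 2).mul
        ((measurable_const.sub Real.measurable_log).pow_const 2))
    have hGnn : ∀ t, 0 ≤ G t := by
      intro t; rw [hG]; dsimp only
      split
      · positivity
      · exact le_refl 0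
    have hGid : ∀ t ∈ Ioi (0:ℝ), ENNReal.ofReal t * ENNReal.ofReal (G t)
        = ENNReal.ofReal ((Ioo (0:ℝ) 1).indicator ψ t) := by
      intro t ht
      rw [mem_Ioi] at ht
      rw [← ENNReal.ofReal_mul ht.le]
      congr 1
      by_cases h : t ∈ Ioo (0:ℝ) 1
      · rw [hG]; simp only [h, if_pos, indicator_of_mem h, hψ]
        have h1 : t ≠ 0 := ht.ne'
        have hlt : Real.log t < 0 := Real.log_neg h.1 h.2
        have h2 : c - Real.log t ≠ 0 := ne_of_gt (by linarith)
        field_simp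
      · rw [hG]; simp [h, indicator_of_notMem h]
    have hradial : ∫⁻ w : ℂ, ENNReal.ofReal (G ‖w‖)
        = 2 * (NNReal.pi : ℝ≥0∞) * ENNReal.ofReal (4 * r ^ 2 / c) := by
      rw [lintegral_radial _ (show Measurable fun t => ENNReal.ofReal (G t) from ENNReal.measurable_ofReal.comp hGmeas)]
      congr 1
      rw [setLIntegral_congr_fun measurableSet_Ioi hGid]
      have hind : (fun t => ENNReal.ofReal ((Ioo (0:ℝ) 1).indicator ψ t))
          = (Ioo (0:ℝ) 1).indicator (fun t => ENNReal.ofReal (ψ t)) := by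
        ext t; by_cases h : t ∈ Ioo (0:ℝ) 1 <;> simp [h]
      rw [hind, lintegral_indicator measurableSet_Ioo, Measure.restrict_restrict measurableSet_Ioo,
        inter_eq_self_of_subset_left (fun x hx => hx.1)]
      rw [← ofReal_integral_eq_lintegral_ofReal hψint ?pos, hψval]
      case pos =>
        filter_upwards [ae_restrict_mem measurableSet_Ioo] with t ht
        exact div_nonneg (by positivity) (mul_nonneg ht.1.le (sq_nonneg _))
    have hpoint : ∀ z ∈ ball (0:ℂ) 1, ENNReal.ofReal (F z)
        ≤ ENNReal.ofReal (G (‖z - lam‖)) + ENNReal.ofReal (25/4) := by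
      intro z hz
      obtain ⟨ht0, ht2, _⟩ := habs z hz
      set t : ℝ := ‖z - lam‖ with htdef
      have ht2r : t ≤ 2 * r := by nlinarith
      rcases lt_or_ge t 1 with h1 | h1
      · have hmem : t ∈ Ioo (0:ℝ) 1 := ⟨ht0, h1⟩
        have hlogt : Real.log t < 0 := Real.log_neg ht0 h1
        have hceq : 1 + Real.log (2 * r / t) = c - Real.log t := by
          rw [Real.log_div (by positivity) ht0.ne', hcdef]; ring
        have hFG : F z = G t := by
          rw [hG]; simp only [hmem, if_pos]
          rw [hF]; dsimp only
          rw [← htdef, hceq, div_pow, div_div]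
          ring_nf
        rw [hFG]
        exact self_le_add_right _ _
      · have ha1 : 1 ≤ 2 * r / t := by rw [le_div_iff₀ ht0]; nlinarith
        have h2r : 2 * r / t ≤ 2 * r := div_le_self (by positivity) h1
        have hla : 0 ≤ Real.log (2 * r / t) := Real.log_nonneg ha1
        have hFle : F z ≤ 25/4 := by
          have hsq : F z ≤ (2 * r / t) ^ 2 := by
            rw [hF]; dsimp only
            rw [← htdef]
            apply div_le_self (sq_nonneg _)
            nlinarith
          nlinarith
        calc ENNReal.ofReal (F z) ≤ ENNReal.ofReal (25/4) := ENNReal.ofReal_le_ofReal hFle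
          _ ≤ _ := self_le_add_left _ _
    have heq : ∫ z in ball (0:ℂ) 1, F z
        = (∫⁻ z in ball (0:ℂ) 1, ENNReal.ofReal (F z)).toReal := by
      rw [integral_eq_lintegral_of_nonneg_ae (ae_of_all _ hF0) hFmeas.aestronglyMeasurable]
    have hpi' : (NNReal.pi : ℝ≥0∞) = ENNReal.ofReal Real.pi := by
      rw [← NNReal.coe_real_pi, ENNReal.ofReal_coe_nnreal]
    have hb0 : (0:ℝ) ≤ 8 * r ^ 2 / c := div_nonneg (by positivity) hc0.le
    have hchain : ∫⁻ z in ball (0:ℂ) 1, ENNReal.ofReal (F z)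
        ≤ ENNReal.ofReal (Real.pi * (8 * r ^ 2 / c + 25/4)) := by
      have step1 : ∫⁻ z in ball (0:ℂ) 1, ENNReal.ofReal (F z)
          ≤ ∫⁻ z in ball (0:ℂ) 1,
              (ENNReal.ofReal (G (‖z - lam‖)) + ENNReal.ofReal (25/4)) := by
        refine setLIntegral_mono ?_ hpoint
        exact ((ENNReal.measurable_ofReal.comp (hGmeas.comp
          (continuous_norm.measurable.comp (measurable_id.sub_const lam)))).add
          measurable_const)
      have step2 : ∫⁻ z in ball (0:ℂ) 1,
            (ENNReal.ofReal (G (‖z - lam‖)) + ENNReal.ofReal (25/4))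
          = (∫⁻ z in ball (0:ℂ) 1, ENNReal.ofReal (G (‖z - lam‖)))
            + ENNReal.ofReal (25/4) * volume (ball (0:ℂ) 1) := by
        rw [lintegral_add_right _ measurable_const, setLIntegral_const]
      have step3 : ∫⁻ z in ball (0:ℂ) 1, ENNReal.ofReal (G (‖z - lam‖))
          ≤ ∫⁻ z : ℂ, ENNReal.ofReal (G (‖z - lam‖)) :=
        setLIntegral_le_lintegral _ _
      have step4 : ∫⁻ z : ℂ, ENNReal.ofReal (G (‖z - lam‖))
          = ∫⁻ w : ℂ, ENNReal.ofReal (G ‖w‖) := by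
        have habs' : ∀ z : ℂ, ‖z - lam‖ = ‖z + (-lam)‖ := by
          intro z; rw [← sub_eq_add_neg]
        simp_rw [habs']
        exact lintegral_add_right_eq_self (fun w => ENNReal.ofReal (G ‖w‖)) (-lam)
      have hfinal : 2 * (NNReal.pi : ℝ≥0∞) * ENNReal.ofReal (4 * r ^ 2 / c)
            + ENNReal.ofReal (25/4) * volume (ball (0:ℂ) 1)
          = ENNReal.ofReal (Real.pi * (8 * r ^ 2 / c + 25/4)) := by
        rw [hballvol, hpi']
        rw [show (2 : ℝ≥0∞) = ENNReal.ofReal 2 by simp]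
        rw [← ENNReal.ofReal_mul (by norm_num), ← ENNReal.ofReal_mul (by positivity),
          ← ENNReal.ofReal_mul (by norm_num), ← ENNReal.ofReal_add (mul_nonneg (by positivity) (div_nonneg (by positivity) hc0.le)) (by positivity)]
        congr 1
        ring
      calc ∫⁻ z in ball (0:ℂ) 1, ENNReal.ofReal (F z)
          ≤ _ := step1
        _ = _ := step2
        _ ≤ (∫⁻ z : ℂ, ENNReal.ofReal (G (‖z - lam‖)))
            + ENNReal.ofReal (25/4) * volume (ball (0:ℂ) 1) := add_le_add_left step3 _
        _ = 2 * (NNReal.pi : ℝ≥0∞) * ENNReal.ofReal (4 * r ^ 2 / c)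
            + ENNReal.ofReal (25/4) * volume (ball (0:ℂ) 1) := by rw [step4, hradial]
        _ = _ := hfinal
    have hineq : ∫ z in ball (0:ℂ) 1, F z ≤ Real.pi * (8 * r ^ 2 / c + 25/4) := by
      rw [heq]
      exact ENNReal.toReal_le_of_le_ofReal (mul_nonneg hπ.le (by linarith)) hchain
    have harith : 8 * r ^ 2 / c + 25/4 ≤ 16 := by
      have h1 : 8 * r ^ 2 ≤ (16 - 25/4) * c := by nlinarith
      have h2 := (div_le_iff₀ hc0).2 h1
      linarith
    have h16 : ∫ z in ball (0:ℂ) 1, F z ≤ Real.pi * 16 :=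
      hineq.trans (mul_le_mul_of_nonneg_left harith hπ.le)
    rw [show (1:ℝ)/Real.pi * ∫ z in ball (0:ℂ) 1, F z
        = (∫ z in ball (0:ℂ) 1, F z)/Real.pi by ring]
    rw [div_le_iff₀ hπ]
    linarith
end

section
/- Let H be a reproducing kernel Hilbert space of functions on a domain with 1 ∈ Mult(H) and ‖1‖_{Mult(H)} = 1, and let φ ∈ Mult(H) with ‖φ‖_{Mult(H)} ≤ 1 and φ not identically 1. If (1 − φ(z)) log(1 − φ(z)) = −φ(z)(1 − Σ_{n=2}^∞ φ(z)^n/(n(n+1))) pointwise wherever |φ(z)| < 1, then the function u = (1 − φ)·log(1 − φ) is a multiplier of H with ‖u‖_{Mult(H)} ≤ 1 + Σ_{n=2}^∞ 1/(n(n+1)) ≤ 3/2. -/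
/-- `T` is the multiplication operator by `φ` on the Hilbert function space realized by
the embedding `e : H →ₗ[ℂ] (X → ℂ)`. -/
def IsMultOp {X H : Type*} [NormedAddCommGroup H] [InnerProductSpace ℂ H]
    (e : H →ₗ[ℂ] (X → ℂ)) (φ : X → ℂ) (T : H →L[ℂ] H) : Prop :=
  ∀ h : H, e (T h) = φ * e h

/-- If `φ` is a contractive multiplier of a Hilbert function space `H` (with `1` a
multiplier of norm `1`), `φ` not identically `1`, `|φ| < 1` pointwise, and the power
series identity `(1−φ)log(1−φ) = −φ(1 − Σ_{n≥2} φⁿ/(n(n+1)))` holds pointwise, then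
`u = (1−φ)·log(1−φ)` is a multiplier of `H` with
`‖u‖_{Mult} ≤ 1 + Σ_{n≥2} 1/(n(n+1)) ≤ 3/2`. -/
theorem one_sub_mul_log_one_sub_is_mult {X H : Type*} [NormedAddCommGroup H]
    [InnerProductSpace ℂ H] [CompleteSpace H]
    (e : H →ₗ[ℂ] (X → ℂ)) (he : Function.Injective e)
    (T1 : H →L[ℂ] H) (h1 : IsMultOp e (fun _ => 1) T1) (h1norm : ‖T1‖ = 1)
    (φ : X → ℂ) (Tφ : H →L[ℂ] H) (hφ : IsMultOp e φ Tφ) (hφnorm : ‖Tφ‖ ≤ 1)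
    (hφne : φ ≠ fun _ => 1)
    (hφlt : ∀ x, ‖φ x‖ < 1)
    (hid : ∀ x, ‖φ x‖ < 1 →
      (1 - φ x) * Complex.log (1 - φ x)
        = -φ x * (1 - ∑' n : ℕ, φ x ^ (n + 2) / ((n + 2) * (n + 3)))) :
    ∃ Tu : H →L[ℂ] H,
      IsMultOp e (fun x => (1 - φ x) * Complex.log (1 - φ x)) Tu ∧
      ‖Tu‖ ≤ 1 + ∑' n : ℕ, (1 : ℝ) / ((n + 2) * (n + 3)) ∧ ‖Tu‖ ≤ 3 / 2 := by
  classical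
  set A := Tφ with hA
  -- real coefficient sum
  have hconv : HasSum (fun n : ℕ => (1 : ℝ) / ((n + 2) * (n + 3))) (1/2) := by
    have key : ∀ n : ℕ, (1:ℝ)/((n+2)*(n+3)) = 1/(n+2) - 1/(n+3) := by
      intro n
      have h2 : ((n:ℝ)+2) ≠ 0 := by positivity
      have h3 : ((n:ℝ)+3) ≠ 0 := by positivity
      field_simp
      ring
    have hnn : ∀ n : ℕ, 0 ≤ (1:ℝ)/((n+2)*(n+3)) := by intro n; positivity
    rw [hasSum_iff_tendsto_nat_of_nonneg hnn]
    have hsum : ∀ m : ℕ, ∑ i ∈ Finset.range m, (1:ℝ)/((i+2)*(i+3))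
        = 1/2 - 1/(m+2) := by
      intro m
      have h0 := Finset.sum_range_sub' (fun i : ℕ => (1:ℝ)/(i+2)) m
      simp only [key]
      convert h0 using 2 with i
      · push_cast; ring_nf
      · norm_num
    simp only [hsum]
    have hlim : Filter.Tendsto (fun m : ℕ => (1:ℝ)/(m+2)) Filter.atTop (nhds 0) := by
      simp only [one_div]
      exact Filter.Tendsto.comp tendsto_inv_atTop_zero
        ((Filter.tendsto_atTop_add_const_right Filter.atTop (2:ℝ)
          tendsto_natCast_atTop_atTop))
    simpa using (tendsto_const_nhds (x := (1/2:ℝ))).sub hlim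
  have hsummR : Summable (fun n : ℕ => (1 : ℝ) / ((n + 2) * (n + 3))) := hconv.summable
  have htsumR : ∑' n : ℕ, (1 : ℝ) / ((n + 2) * (n + 3)) = 1/2 := hconv.tsum_eq
  -- powers of A are contractions
  have hAn : ∀ i : ℕ, ‖A ^ i‖ ≤ 1 := by
    intro i
    induction i with
    | zero => simpa [ContinuousLinearMap.one_def] using
        (ContinuousLinearMap.norm_id_le : ‖ContinuousLinearMap.id ℂ H‖ ≤ 1)
    | succ k ih =>
      calc ‖A ^ (k+1)‖ = ‖A ^ k * A‖ := by rw [pow_succ]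
        _ ≤ ‖A ^ k‖ * ‖A‖ := norm_mul_le _ _
        _ ≤ 1 * 1 := mul_le_mul ih hφnorm (norm_nonneg _) zero_le_one
        _ = 1 := one_mul 1
  -- complex coefficients
  set d : ℕ → ℂ := fun n => ((n:ℂ)+2)*((n:ℂ)+3) with hd
  have habs : ∀ n : ℕ, ‖(d n)⁻¹‖ = 1/((n+2)*(n+3)) := by
    intro n
    have hcast : d n = (((n+2)*(n+3) : ℕ) : ℂ) := by simp only [hd]; push_cast; ring
    rw [hcast, norm_inv, Complex.norm_natCast]
    push_cast
    ring
  -- the operator series G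
  have hGbound : ∀ n : ℕ, ‖(d n)⁻¹ • A ^ (n+2)‖ ≤ (1:ℝ)/((n+2)*(n+3)) := by
    intro n
    rw [norm_smul, habs n]
    calc (1:ℝ)/((n+2)*(n+3)) * ‖A ^ (n+2)‖ ≤ (1:ℝ)/((n+2)*(n+3)) * 1 := by
          apply mul_le_mul_of_nonneg_left (hAn _); positivity
      _ = _ := mul_one _
  have hGnsum : Summable (fun n : ℕ => ‖(d n)⁻¹ • A ^ (n+2)‖) :=
    Summable.of_nonneg_of_le (fun n => norm_nonneg _) hGbound hsummR
  have hGsum : Summable (fun n : ℕ => (d n)⁻¹ • A ^ (n+2)) :=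
    hGnsum.of_norm
  set G : H →L[ℂ] H := ∑' n : ℕ, (d n)⁻¹ • A ^ (n+2) with hG
  have hGnorm : ‖G‖ ≤ 1/2 := by
    calc ‖G‖ ≤ ∑' n : ℕ, ‖(d n)⁻¹ • A ^ (n+2)‖ :=
          norm_tsum_le_tsum_norm hGnsum
      _ ≤ ∑' n : ℕ, (1:ℝ)/((n+2)*(n+3)) := Summable.tsum_le_tsum hGbound hGnsum hsummR
      _ = 1/2 := htsumR
  have hTunorm : ‖-(A * (1 - G))‖ ≤ 3/2 := by
    rw [norm_neg]
    calc ‖A * (1 - G)‖ ≤ ‖A‖ * ‖(1:H →L[ℂ] H) - G‖ := norm_mul_le _ _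
      _ ≤ 1 * (‖(1:H →L[ℂ] H)‖ + ‖G‖) :=
          mul_le_mul hφnorm (norm_sub_le _ _) (norm_nonneg _) zero_le_one
      _ ≤ 1 * (1 + 1/2) := by
          apply mul_le_mul_of_nonneg_left _ zero_le_one
          have h1le : ‖(1:H →L[ℂ] H)‖ ≤ 1 := by
            simpa [ContinuousLinearMap.one_def] using
              (ContinuousLinearMap.norm_id_le : ‖ContinuousLinearMap.id ℂ H‖ ≤ 1)
          linarith
      _ = 3/2 := by norm_num
  refine ⟨-(A * (1 - G)), ?_, by rw [htsumR]; linarith, hTunorm⟩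
  -- multiplier property
  intro h
  funext x
  set c := φ x with hc
  have hclt : ‖c‖ < 1 := hφlt x
  set r := ‖c‖ with hr
  have hr0 : 0 ≤ r := norm_nonneg c
  have hr1 : (0:ℝ) < 1 - r := by linarith
  -- the operator R
  set P : ℕ → (H →L[ℂ] H) := fun n =>
    ∑ i ∈ Finset.range (n+2), A ^ i * (c • (1:H →L[ℂ] H)) ^ (n+2-1-i) with hP
  have hPnorm : ∀ n : ℕ, ‖P n‖ ≤ (1-r)⁻¹ := by
    intro n
    calc ‖P n‖ ≤ ∑ i ∈ Finset.range (n+2), ‖A ^ i * (c • (1:H →L[ℂ] H)) ^ (n+2-1-i)‖ :=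
          norm_sum_le _ _
      _ ≤ ∑ i ∈ Finset.range (n+2), r ^ (n+2-1-i) := by
          apply Finset.sum_le_sum
          intro i _
          calc ‖A ^ i * (c • (1:H →L[ℂ] H)) ^ (n+2-1-i)‖
              ≤ ‖A ^ i‖ * ‖(c • (1:H →L[ℂ] H)) ^ (n+2-1-i)‖ := norm_mul_le _ _
            _ ≤ 1 * (r ^ (n+2-1-i) * 1) := by
                apply mul_le_mul (hAn i) ?_ (norm_nonneg _) zero_le_one
                rw [smul_pow, one_pow, norm_smul, norm_pow]
                apply mul_le_mul_of_nonneg_left ?_ (by positivity)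
                simpa [ContinuousLinearMap.one_def] using
                  (ContinuousLinearMap.norm_id_le : ‖ContinuousLinearMap.id ℂ H‖ ≤ 1)
            _ = r ^ (n+2-1-i) := by ring
      _ = ∑ k ∈ Finset.range (n+2), r ^ k :=
          Finset.sum_range_reflect (fun k => r ^ k) (n+2)
      _ ≤ ∑' k : ℕ, r ^ k := Summable.sum_le_tsum _ (fun k _ => pow_nonneg hr0 k)
            (summable_geometric_of_lt_one hr0 hclt)
      _ = (1-r)⁻¹ := (hasSum_geometric_of_lt_one hr0 hclt).tsum_eq
  have hRsum : Summable (fun n : ℕ => (d n)⁻¹ • P n) := by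
    have hbound : Summable (fun n : ℕ => (1-r)⁻¹ * ((1:ℝ)/((n+2)*(n+3)))) :=
      hsummR.mul_left _
    apply Summable.of_norm_bounded hbound
    intro n
    rw [norm_smul, habs n]
    calc (1:ℝ)/((n+2)*(n+3)) * ‖P n‖ ≤ (1:ℝ)/((n+2)*(n+3)) * (1-r)⁻¹ :=
          mul_le_mul_of_nonneg_left (hPnorm n) (by positivity)
      _ = (1-r)⁻¹ * ((1:ℝ)/((n+2)*(n+3))) := mul_comm _ _
  set R : H →L[ℂ] H := ∑' n : ℕ, (d n)⁻¹ • P n with hR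
  -- scalar series
  have hgsum : Summable (fun n : ℕ => (d n)⁻¹ * c ^ (n+2)) := by
    apply Summable.of_norm_bounded hsummR
    intro n
    rw [norm_mul, habs n, norm_pow]
    calc (1:ℝ)/((n+2)*(n+3)) * r ^ (n+2) ≤ (1:ℝ)/((n+2)*(n+3)) * 1 := by
          apply mul_le_mul_of_nonneg_left (pow_le_one₀ hr0 hclt.le); positivity
      _ = _ := mul_one _
  set g : ℂ := ∑' n : ℕ, (d n)⁻¹ * c ^ (n+2) with hg
  -- key per-term identity
  have hcomm : Commute A (c • (1:H →L[ℂ] H)) := (Commute.one_right A).smul_right c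
  have hkey : ∀ n : ℕ, (A - c • 1) * ((d n)⁻¹ • P n)
      = (d n)⁻¹ • A ^ (n+2) - ((d n)⁻¹ * c ^ (n+2)) • 1 := by
    intro n
    rw [mul_smul_comm, hP]
    rw [hcomm.mul_geom_sum₂ (n+2)]
    rw [smul_pow, one_pow, smul_sub, smul_smul]
  -- summability of the subtracted family
  have hssum : Summable (fun n : ℕ => ((d n)⁻¹ * c ^ (n+2)) • (1:H →L[ℂ] H)) :=
    hgsum.smul_const _
  -- key operator identity
  have hopid : (A - c • 1) * R = G - g • 1 := by
    rw [hR, ← Summable.tsum_mul_left _ hRsum]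
    rw [hG, hg]
    calc (∑' n : ℕ, (A - c • 1) * ((d n)⁻¹ • P n))
        = ∑' n : ℕ, ((d n)⁻¹ • A ^ (n+2) - ((d n)⁻¹ * c ^ (n+2)) • (1:H →L[ℂ] H)) := by
          exact tsum_congr hkey
      _ = (∑' n : ℕ, (d n)⁻¹ • A ^ (n+2)) - ∑' n : ℕ, ((d n)⁻¹ * c ^ (n+2)) • (1:H →L[ℂ] H) :=
          Summable.tsum_sub hGsum hssum
      _ = (∑' n : ℕ, (d n)⁻¹ • A ^ (n+2)) - (∑' n : ℕ, (d n)⁻¹ * c ^ (n+2)) • (1:H →L[ℂ] H) := by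
          rw [Summable.tsum_smul_const hgsum]
  -- apply to h
  have happ : G h - g • h = A (R h) - c • (R h) := by
    have h0 := congrArg (fun (S : H →L[ℂ] H) => S h) hopid
    simpa [ContinuousLinearMap.mul_apply, ContinuousLinearMap.sub_apply,
      ContinuousLinearMap.smul_apply, ContinuousLinearMap.one_apply] using h0.symm
  have hEG : e (G h) x = g * e h x := by
    have h2 : e (G h - g • h) x = e (A (R h) - c • (R h)) x := by rw [happ]
    rw [map_sub, map_sub, map_smul, map_smul] at h2
    have h3 : e (A (R h)) x = c * e (R h) x := by
      have := congrFun (hφ (R h)) x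
      simpa [Pi.mul_apply, hc] using this
    simp only [Pi.sub_apply, Pi.smul_apply, smul_eq_mul] at h2
    rw [h3] at h2
    linear_combination h2
  -- final computation
  have hg' : (∑' n : ℕ, φ x ^ (n + 2) / (((n:ℂ) + 2) * ((n:ℂ) + 3))) = g := by
    rw [hg]
    apply tsum_congr
    intro n
    rw [← hc, hd]
    rw [div_eq_mul_inv, mul_comm]
  have hu : (1 - φ x) * Complex.log (1 - φ x) = -c * (1 - g) := by
    rw [hid x hclt, hg', hc]
  show e ((-(A * (1 - G))) h) x = _
  have hTu : (-(A * (1 - G))) h = -(A (h - G h)) := by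
    simp [ContinuousLinearMap.mul_apply, ContinuousLinearMap.sub_apply,
      ContinuousLinearMap.one_apply]
  rw [hTu, map_neg, Pi.neg_apply, map_sub]
  have h4 : e (A (h - G h)) x = c * (e h x - e (G h) x) := by
    have := congrFun (hφ (h - G h)) x
    rw [map_sub] at this
    simpa [Pi.mul_apply, Pi.sub_apply, hc] using this
  rw [map_sub] at h4
  rw [h4, hEG]
  simp only [Pi.mul_apply, hu]
  ring
end
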